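/- For the symmetric Pareto distribution with shape 2 (density f(x) = 1/(|x|+1)^3, CDF F(x) = 1/(2(1-x)^2) for x<0 and 1 - 1/(2(x+1)^2) for x≥0), and for every c > 0: ∫_{-∞}^{∞} f(z+c) F(z) dz ≥ 1/(4(c+1)^2). -/

import Mathlib

open Real MeasureTheory

/-- Density of the symmetric Pareto distribution with shape 2. -/
noncomputable def sParetoPdf (x : ℝ) : ℝ := 1 / (|x| + 1) ^ 3

/-- CDF of the symmetric Pareto distribution with shape 2. -/
noncomputable def sParetoCdf (x : ℝ) : ℝ :=
  if x < 0 then 1 / (2 * (1 - x) ^ 2) else 1 - 1 / (2 * (x + 1) ^ 2)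

lemma sParetoPdf_nonneg (x : ℝ) : 0 ≤ sParetoPdf x := by
  unfold sParetoPdf; positivity

lemma sParetoPdf_continuous : Continuous sParetoPdf := by
  unfold sParetoPdf
  exact Continuous.div continuous_const ((continuous_abs.add continuous_const).pow 3)
    (fun x => by positivity)

lemma sParetoCdf_measurable : Measurable sParetoCdf := by
  unfold sParetoCdf
  exact Measurable.ite (measurableSet_Iio) (by fun_prop) (by fun_prop)

lemma sParetoCdf_nonneg (x : ℝ) : 0 ≤ sParetoCdf x := by
  unfold sParetoCdf
  split_ifs with h
  · positivity
  · push_neg at h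
    have h1 : (1:ℝ) ≤ (x+1)^2 := by nlinarith
    have : 1/(2*(x+1)^2) ≤ 1/2 := by
      rw [div_le_div_iff₀ (by positivity) (by norm_num)]; nlinarith
    linarith

lemma sParetoCdf_le_one (x : ℝ) : sParetoCdf x ≤ 1 := by
  unfold sParetoCdf
  split_ifs with h
  · have h1 : (1:ℝ) ≤ (1-x)^2 := by nlinarith
    have : 1/(2*(1-x)^2) ≤ 1/2 := by
      rw [div_le_div_iff₀ (by positivity) (by norm_num)]; nlinarith
    linarith
  · have : 0 < (x+1)^2 := by push_neg at h; positivity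
    have : 0 ≤ 1/(2*(x+1)^2) := by positivity
    linarith

lemma sParetoCdf_half (x : ℝ) (hx : 0 ≤ x) : 1/2 ≤ sParetoCdf x := by
  unfold sParetoCdf
  rw [if_neg (not_lt.mpr hx)]
  have h1 : (1:ℝ) ≤ (x+1)^2 := by nlinarith
  have : 1/(2*(x+1)^2) ≤ 1/2 := by
    rw [div_le_div_iff₀ (by positivity) (by norm_num)]; nlinarith
  linarith

lemma sParetoPdf_integrable : Integrable sParetoPdf := by
  have h := integrable_one_add_norm (E := ℝ) (μ := volume) (r := 3) (by norm_num)
  refine h.congr (ae_of_all _ fun x => ?_)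
  show (1 + ‖x‖) ^ (-(3:ℝ)) = sParetoPdf x
  rw [Real.norm_eq_abs, Real.rpow_neg (by positivity),
    show ((3:ℝ)) = ((3:ℕ):ℝ) by norm_num, Real.rpow_natCast]
  simp [sParetoPdf, add_comm]

theorem stmt5 (c : ℝ) (hc : 0 < c) :
    1 / (4 * (c + 1) ^ 2) ≤ ∫ z : ℝ, sParetoPdf (z + c) * sParetoCdf z := by
  set a := c + 1 with ha
  have ha1 : 1 < a := by linarith
  have ha0 : 0 < a := by linarith
  have hint_shift : Integrable (fun z => sParetoPdf (z + c)) :=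
    sParetoPdf_integrable.comp_add_right c
  have hmeas : AEStronglyMeasurable (fun z => sParetoPdf (z + c) * sParetoCdf z) volume :=
    ((sParetoPdf_continuous.comp (continuous_id.add continuous_const)).aestronglyMeasurable).mul
      sParetoCdf_measurable.aestronglyMeasurable
  have hint_prod : Integrable (fun z => sParetoPdf (z + c) * sParetoCdf z) := by
    refine hint_shift.mono' hmeas (ae_of_all _ fun z => ?_)
    rw [Real.norm_eq_abs, abs_of_nonneg (mul_nonneg (sParetoPdf_nonneg _) (sParetoCdf_nonneg _))]
    calc sParetoPdf (z + c) * sParetoCdf z ≤ sParetoPdf (z + c) * 1 :=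
          mul_le_mul_of_nonneg_left (sParetoCdf_le_one z) (sParetoPdf_nonneg _)
      _ = sParetoPdf (z + c) := mul_one _
  -- step 1: restrict to Ioi 0
  have step1 : ∫ z in Set.Ioi (0:ℝ), sParetoPdf (z + c) * sParetoCdf z
      ≤ ∫ z : ℝ, sParetoPdf (z + c) * sParetoCdf z :=
    setIntegral_le_integral hint_prod
      (ae_of_all _ fun z => mul_nonneg (sParetoPdf_nonneg _) (sParetoCdf_nonneg _))
  -- step 2: lower bound on Ioi 0 by f(z+c) * (1/2)
  have step2 : ∫ z in Set.Ioi (0:ℝ), sParetoPdf (z + c) * (1/2)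
      ≤ ∫ z in Set.Ioi (0:ℝ), sParetoPdf (z + c) * sParetoCdf z := by
    refine setIntegral_mono_on (hint_shift.mul_const _).integrableOn
      hint_prod.integrableOn measurableSet_Ioi (fun z hz => ?_)
    exact mul_le_mul_of_nonneg_left (sParetoCdf_half z (le_of_lt hz)) (sParetoPdf_nonneg _)
  -- compute the integral of f(z+c) over Ioi 0
  have hcongr : ∀ z ∈ Set.Ioi (0:ℝ), sParetoPdf (z + c) = ((z + a)^3)⁻¹ := by
    intro z hz
    have hz0 : (0:ℝ) < z := hz
    unfold sParetoPdf
    rw [abs_of_nonneg (by linarith), one_div]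
    rw [ha]
    ring_nf
  have hF : ∀ x ∈ Set.Ici (0:ℝ), HasDerivAt (fun z => -(1/2) * ((z + a)^2)⁻¹)
      (((x + a)^3)⁻¹) x := by
    intro x hx
    have hx0 : (0:ℝ) ≤ x := hx
    have hxa : 0 < x + a := by linarith
    have h1 : HasDerivAt (fun z : ℝ => z + a) 1 x := (hasDerivAt_id x).add_const a
    have h2 : HasDerivAt (fun z : ℝ => (z + a)^2) (2 * (x + a)) x := by
      simpa using h1.fun_pow 2
    have h3 := (h2.fun_inv (by positivity)).const_mul (-(1/2) : ℝ)
    refine h3.congr_deriv ?_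
    field_simp
  have htend : Filter.Tendsto (fun z : ℝ => -(1/2) * ((z + a)^2)⁻¹) Filter.atTop (nhds 0) := by
    have h1 : Filter.Tendsto (fun z : ℝ => (z + a)^2) Filter.atTop Filter.atTop :=
      (Filter.tendsto_pow_atTop (two_ne_zero)).comp (Filter.tendsto_atTop_add_const_right _ a Filter.tendsto_id)
    have h2 := h1.inv_tendsto_atTop
    have h3 := h2.const_mul (-(1/2) : ℝ)
    simpa using h3
  have hIntOn : IntegrableOn (fun z : ℝ => ((z + a)^3)⁻¹) (Set.Ioi 0) := by
    refine (hint_shift.integrableOn).congr_fun ?_ measurableSet_Ioi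
    exact hcongr
  have hcomp : ∫ z in Set.Ioi (0:ℝ), ((z + a)^3)⁻¹ = 1 / (2 * a^2) := by
    have := integral_Ioi_of_hasDerivAt_of_tendsto
      (f := fun z => -(1/2) * ((z + a)^2)⁻¹) (f' := fun z => ((z + a)^3)⁻¹) (a := 0) (m := 0)
      ?_ (fun x hx => hF x (Set.Ioi_subset_Ici_self hx)) hIntOn htend
    · rw [this]
      field_simp
      ring
    · exact ((hF 0 Set.self_mem_Ici).continuousAt).continuousWithinAt
  have step3 : ∫ z in Set.Ioi (0:ℝ), sParetoPdf (z + c) * (1/2) = 1 / (4 * a^2) := by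
    rw [setIntegral_congr_fun measurableSet_Ioi
      (fun z hz => by simp only [hcongr z hz] : Set.EqOn (fun z => sParetoPdf (z + c) * (1/2))
        (fun z => ((z + a)^3)⁻¹ * (1/2)) (Set.Ioi 0)),
      integral_mul_const, hcomp]
    field_simp
    ring
  calc 1 / (4 * (c + 1)^2) = ∫ z in Set.Ioi (0:ℝ), sParetoPdf (z + c) * (1/2) := by
        rw [step3]
    _ ≤ ∫ z in Set.Ioi (0:ℝ), sParetoPdf (z + c) * sParetoCdf z := step2
    _ ≤ ∫ z : ℝ, sParetoPdf (z + c) * sParetoCdf z := step1
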